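/- Let D be a random variable whose conditional mean given Z = z is z(1 + λz/2) and whose conditional variance given Z = z is (λ/3) z^3, where Z is exponentially distributed with mean z̄ = 1/μ > 0 and λ ≥ 0. Then Var(D) = z̄^2 + 6 λ z̄^3 + 5 λ^2 z̄^4. -/

import Mathlib

open MeasureTheory ProbabilityTheory Real Set
open scoped ENNReal NNReal

lemma expMeasure_repr (r : ℝ) : expMeasure r
    = (volume : Measure ℝ).withDensity (fun x => ((gammaPDFReal 1 r x).toNNReal : ℝ≥0∞)) := rfl

lemma pdf_smul_eq {r : ℝ} (hr : 0 < r) (y x : ℝ) :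
    (gammaPDFReal 1 r x).toNNReal • y = gammaPDFReal 1 r x * y := by
  rw [NNReal.smul_def]
  rw [Real.coe_toNNReal _ (gammaPDFReal_nonneg one_pos hr x), smul_eq_mul]

lemma expMeasure_integral_pow {r : ℝ} (hr : 0 < r) {n : ℕ} (hn : 0 < n) :
    ∫ x, x ^ n ∂(expMeasure r) = n.factorial / r ^ n := by
  rw [expMeasure_repr,
    integral_withDensity_eq_integral_smul ((measurable_gammaPDFReal 1 r).real_toNNReal) _]
  simp_rw [pdf_smul_eq hr]
  rw [← setIntegral_eq_integral_of_forall_compl_eq_zero (s := Ioi (0:ℝ)) (fun x hx => by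
    simp only [mem_Ioi, not_lt] at hx
    rcases lt_or_eq_of_le hx with h | h
    · rw [gammaPDFReal, if_neg (not_le.mpr h), zero_mul]
    · rw [h, zero_pow hn.ne', mul_zero])]
  have key : ∀ x ∈ Ioi (0:ℝ), gammaPDFReal 1 r x * x ^ n
      = r * (x ^ (((n:ℝ) + 1) - 1) * exp (-(r * x))) := by
    intro x hx
    rw [gammaPDFReal, if_pos (le_of_lt hx), Real.Gamma_one, Real.rpow_one, sub_self,
      Real.rpow_zero]
    have hx2 : x ^ (((n:ℝ) + 1) - 1) = x ^ n := by
      rw [add_sub_cancel_right, Real.rpow_natCast]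
    rw [hx2]; ring
  rw [setIntegral_congr_fun measurableSet_Ioi key, integral_const_mul,
    integral_rpow_mul_exp_neg_mul_Ioi (by positivity) hr]
  have h2 : ((1:ℝ)/r) ^ ((n:ℝ) + 1) = (1/r) ^ (n+1) := by
    rw [← Real.rpow_natCast ((1:ℝ)/r) (n+1)]; push_cast; ring_nf
  rw [h2, Real.Gamma_nat_eq_factorial]
  field_simp
  rw [mul_right_comm, ← pow_succ', ← mul_pow, mul_one_div_cancel hr.ne', one_pow]

lemma expMeasure_integrable_pow {r : ℝ} (hr : 0 < r) (n : ℕ) :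
    Integrable (fun x => x ^ n) (expMeasure r) := by
  rw [expMeasure_repr,
    integrable_withDensity_iff_integrable_smul ((measurable_gammaPDFReal 1 r).real_toNNReal)]
  have h1 : (fun x => (gammaPDFReal 1 r x).toNNReal • (x ^ n))
      = fun x => gammaPDFReal 1 r x * x ^ n := funext fun x => pdf_smul_eq hr _ x
  rw [h1, ← integrableOn_iff_integrable_of_support_subset (s := Ici (0:ℝ)) (fun x hx => by
    contrapose! hx
    simp only [mem_Ici, not_le] at hx
    simp [Function.mem_support, gammaPDFReal, if_neg (not_le.mpr hx)])]
  rw [integrableOn_Ici_iff_integrableOn_Ioi]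
  have h0 : (-1:ℝ) < (n:ℝ) := by have := n.cast_nonneg (α := ℝ); linarith
  have h := (integrableOn_rpow_mul_exp_neg_mul_rpow (s := (n:ℝ)) (p := 1) (b := r)
    h0 zero_lt_one hr).const_mul r
  refine IntegrableOn.congr_fun h (fun x hx => ?_) measurableSet_Ioi
  simp only [gammaPDFReal, if_pos (le_of_lt (show (0:ℝ) < x from hx)), Real.Gamma_one, Real.rpow_one, sub_self,
    Real.rpow_zero, Real.rpow_natCast, neg_mul]
  ring_nf


/-- Aggregate delay, stochastic exponential fetch latency: if `Z ~ Exp(1/z̄)` with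
`z̄ > 0`, `λ ≥ 0`, the conditional mean of `D` given `Z` is `Z(1 + λZ/2)` and the
conditional variance of `D` given `Z` is `(λ/3)Z^3`, then
`Var(D) = z̄^2 + 6λ z̄^3 + 5λ^2 z̄^4`. -/
theorem var_agg_delay {Ω : Type*} [MeasureSpace Ω] [IsProbabilityMeasure (ℙ : Measure Ω)]
    (D Z : Ω → ℝ) (hZ : Measurable Z) (hD : MemLp D 2 ℙ)
    (zbar l : ℝ) (hzbar : 0 < zbar) (hl : 0 ≤ l)
    (hlaw : Measure.map Z ℙ = expMeasure (1 / zbar))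
    (hcondMean : (ℙ : Measure Ω)[D | MeasurableSpace.comap Z Real.measurableSpace]
      =ᵐ[ℙ] fun ω => Z ω * (1 + l * Z ω / 2))
    (hcondVar : (ℙ : Measure Ω)[(fun ω => (D ω - Z ω * (1 + l * Z ω / 2)) ^ 2) |
        MeasurableSpace.comap Z Real.measurableSpace]
      =ᵐ[ℙ] fun ω => (l / 3) * (Z ω) ^ 3) :
    variance D ℙ = zbar ^ 2 + 6 * l * zbar ^ 3 + 5 * l ^ 2 * zbar ^ 4 := by
  have hr : (0:ℝ) < 1 / zbar := by positivity
  have hm : MeasurableSpace.comap Z Real.measurableSpace ≤ _ := hZ.comap_le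
  have hDint : Integrable D ℙ := hD.integrable one_le_two
  -- moments of Z
  have hZmom : ∀ n : ℕ, 0 < n → ∫ ω, Z ω ^ n ∂ℙ = n.factorial * zbar ^ n := by
    intro n hn
    have h1 : ∫ ω, Z ω ^ n ∂ℙ = ∫ x, x ^ n ∂(Measure.map Z ℙ) :=
      (integral_map hZ.aemeasurable (measurable_id.pow_const n).aestronglyMeasurable).symm
    rw [h1, hlaw, expMeasure_integral_pow hr hn]
    field_simp
    rw [div_pow, one_pow, one_div_mul_cancel (pow_ne_zero n hzbar.ne')]
  have hZint : ∀ n : ℕ, Integrable (fun ω => Z ω ^ n) ℙ := by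
    intro n
    have h := expMeasure_integrable_pow hr n
    rw [← hlaw] at h
    exact (integrable_map_measure (measurable_id.pow_const n).aestronglyMeasurable
      hZ.aemeasurable).mp h
  have hZ1 : Integrable Z ℙ := by simpa using hZint 1
  have M1 : ∫ ω, Z ω ∂ℙ = zbar := by
    have := hZmom 1 one_pos; simpa using this
  have M2 : ∫ ω, Z ω ^ 2 ∂ℙ = 2 * zbar ^ 2 := by
    have := hZmom 2 two_pos; norm_num [Nat.factorial] at this; linarith
  have M3 : ∫ ω, Z ω ^ 3 ∂ℙ = 6 * zbar ^ 3 := by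
    have := hZmom 3 (by norm_num); norm_num [Nat.factorial] at this; linarith
  have M4 : ∫ ω, Z ω ^ 4 ∂ℙ = 24 * zbar ^ 4 := by
    have := hZmom 4 (by norm_num); norm_num [Nat.factorial] at this; linarith
  -- g and its integrability
  set g : Ω → ℝ := fun ω => Z ω * (1 + l * Z ω / 2) with hgdef
  have hgmeas : Measurable g := by
    apply hZ.mul; fun_prop
  have hg_int : Integrable g ℙ := by
    have : g = fun ω => Z ω + (l/2) * Z ω ^ 2 := funext fun ω => by simp [hgdef]; ring
    rw [this]
    exact hZ1.add ((hZint 2).const_mul _)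
  have hg2_int : Integrable (fun ω => g ω ^ 2) ℙ := by
    have : (fun ω => g ω ^ 2)
        = fun ω => Z ω ^ 2 + l * Z ω ^ 3 + (l ^ 2 / 4) * Z ω ^ 4 := funext fun ω => by
      simp [hgdef]; ring
    rw [this]
    exact (((hZint 2).add ((hZint 3).const_mul _)).add ((hZint 4).const_mul _))
  have hgmem2 : MemLp g 2 ℙ :=
    (memLp_two_iff_integrable_sq hgmeas.aestronglyMeasurable).mpr hg2_int
  have hgD_int : Integrable (g * D) ℙ := by
    have h := hD.smul (φ := g) hgmem2 (p := 2) (q := 2) (r := 1)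
      (hpqr := ⟨by rw [ENNReal.inv_two_add_inv_two, inv_one]⟩)
    rw [smul_eq_mul] at h
    exact memLp_one_iff_integrable.mp h
  have hDsub2_int : Integrable (fun ω => (D ω - g ω) ^ 2) ℙ :=
    (memLp_two_iff_integrable_sq (hD.sub hgmem2).aestronglyMeasurable).mp (hD.sub hgmem2)
  -- conditional expectation identities
  have e1 : ∫ ω, D ω ∂ℙ = ∫ ω, g ω ∂ℙ := by
    rw [← integral_condExp hm (f := D)]
    exact integral_congr_ae hcondMean
  have e2 : ∫ ω, (D ω - g ω) ^ 2 ∂ℙ = ∫ ω, (l / 3) * Z ω ^ 3 ∂ℙ := by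
    rw [← integral_condExp hm (f := fun ω => (D ω - g ω) ^ 2)]
    exact integral_congr_ae hcondVar
  have hgm : StronglyMeasurable[MeasurableSpace.comap Z Real.measurableSpace] g := by
    have hZm : Measurable[MeasurableSpace.comap Z Real.measurableSpace] Z :=
      comap_measurable Z
    exact (hZm.mul (measurable_const.add ((hZm.const_mul l).div_const 2))).stronglyMeasurable
  have e3 : ∫ ω, g ω * D ω ∂ℙ = ∫ ω, g ω ^ 2 ∂ℙ := by
    have pull := condExp_mul_of_stronglyMeasurable_left (μ := ℙ) hgm hgD_int hDint
    calc ∫ ω, g ω * D ω ∂ℙ = ∫ ω, (g * D) ω ∂ℙ := rfl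
      _ = ∫ ω, (ℙ[g * D | MeasurableSpace.comap Z Real.measurableSpace]) ω ∂ℙ :=
          (integral_condExp hm).symm
      _ = ∫ ω, g ω ^ 2 ∂ℙ := by
          refine integral_congr_ae (pull.trans ?_)
          filter_upwards [hcondMean] with ω hω
          simp only [Pi.mul_apply, hω]
          rw [sq]
  -- integral of D^2
  have eD2 : ∫ ω, D ω ^ 2 ∂ℙ
      = ∫ ω, (D ω - g ω) ^ 2 ∂ℙ + 2 * ∫ ω, g ω * D ω ∂ℙ - ∫ ω, g ω ^ 2 ∂ℙ := by
    have hsplit : (fun ω => D ω ^ 2)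
        = fun ω => ((D ω - g ω) ^ 2 + 2 * (g ω * D ω) - g ω ^ 2) := funext fun ω => by ring
    have ha : Integrable (fun ω => (D ω - g ω) ^ 2 + 2 * (g ω * D ω)) ℙ :=
      hDsub2_int.add (hgD_int.const_mul 2)
    have hb : Integrable (fun ω => 2 * (g ω * D ω)) ℙ := hgD_int.const_mul 2
    rw [hsplit, integral_sub ha hg2_int, integral_add hDsub2_int hb, integral_const_mul]
  -- values of the integrals
  have Ig : ∫ ω, g ω ∂ℙ = zbar + l * zbar ^ 2 := by
    have hEq : g = fun ω => Z ω + (l/2) * Z ω ^ 2 := funext fun ω => by simp [hgdef]; ring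
    have hb : Integrable (fun ω => l / 2 * Z ω ^ 2) ℙ := (hZint 2).const_mul _
    rw [hEq, integral_add hZ1 hb, integral_const_mul, M1, M2]; ring
  have Ig2 : ∫ ω, g ω ^ 2 ∂ℙ = 2 * zbar ^ 2 + 6 * l * zbar ^ 3 + 6 * l ^ 2 * zbar ^ 4 := by
    have hEq : (fun ω => g ω ^ 2)
        = fun ω => Z ω ^ 2 + (l * Z ω ^ 3 + (l ^ 2 / 4) * Z ω ^ 4) := funext fun ω => by
      simp [hgdef]; ring
    have h3 : Integrable (fun ω => l * Z ω ^ 3) ℙ := (hZint 3).const_mul _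
    have h4 : Integrable (fun ω => l ^ 2 / 4 * Z ω ^ 4) ℙ := (hZint 4).const_mul _
    have h34 : Integrable (fun ω => l * Z ω ^ 3 + l ^ 2 / 4 * Z ω ^ 4) ℙ := h3.add h4
    rw [hEq, integral_add (hZint 2) h34, integral_add h3 h4, integral_const_mul,
      integral_const_mul, M2, M3, M4]
    ring
  have I3 : ∫ ω, (l / 3) * Z ω ^ 3 ∂ℙ = 2 * l * zbar ^ 3 := by
    rw [integral_const_mul, M3]; ring
  rw [variance_eq_sub hD]
  have hpow : ∀ ω, (D ^ 2) ω = D ω ^ 2 := fun ω => rfl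
  simp only [hpow]
  rw [eD2, e3, e2, e1, Ig, Ig2, I3]
  ring
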